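/- The sequence 2^{-n} E[log(R_n/B)] is non-decreasing in n ≥ 1 and the sequence 2^{-n} E[log(K_B R_n)] is non-increasing in n ≥ 1, where K_B = (B^2+B-1)/(B(B-1)); consequently both converge to a common limit F(β,h), and for all N ≥ 1: F_N - 2^{-N} log B ≤ F ≤ F_N + 2^{-N} log K_B, where F_N := 2^{-N} E[log R_N]. -/

import Mathlib

open MeasureTheory ProbabilityTheory Filter Topology

/-- Transfer a pointwise lower bound through equality in distribution. -/
lemma ae_ge_of_identDistrib {Ω : Type*} [MeasurableSpace Ω] {μ : Measure Ω}
    {f g : Ω → ℝ} (h : IdentDistrib f g μ μ) (c : ℝ) (hg : ∀ x, c ≤ g x) :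
    ∀ᵐ x ∂μ, c ≤ f x := by
  rw [ae_iff]
  have hset : {x | ¬ c ≤ f x} = f ⁻¹' Set.Iio c := by ext x; simp [not_le]
  rw [hset, h.measure_mem_eq measurableSet_Iio]
  have : g ⁻¹' Set.Iio c = ∅ := by
    ext x; simp [not_lt.mpr (hg x)]
  simp [this]

/-- Transfer pointwise strict positivity through equality in distribution. -/
lemma ae_pos_of_identDistrib {Ω : Type*} [MeasurableSpace Ω] {μ : Measure Ω}
    {f g : Ω → ℝ} (h : IdentDistrib f g μ μ) (hg : ∀ x, 0 < g x) :
    ∀ᵐ x ∂μ, 0 < f x := by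
  rw [ae_iff]
  have hset : {x | ¬ 0 < f x} = f ⁻¹' Set.Iic 0 := by ext x; simp [not_lt]
  rw [hset, h.measure_mem_eq measurableSet_Iic]
  have : g ⁻¹' Set.Iic 0 = ∅ := by
    ext x; simp [not_le.mpr (hg x)]
  simp [this]

lemma key_ineq {B x y : ℝ} (hB : 2 < B) (hx : (B - 1) / B ≤ x) (hy : (B - 1) / B ≤ y) :
    (x * y + (B - 1)) / B ≤ (B ^ 2 + B - 1) / (B * (B - 1)) * (x * y) := by
  have hB0 : (0:ℝ) < B := by linarith
  have hB1 : (0:ℝ) < B - 1 := by linarith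
  have hx' : B - 1 ≤ B * x := by
    have := (div_le_iff₀ hB0).mp hx; linarith [this]
  have hy' : B - 1 ≤ B * y := by
    have := (div_le_iff₀ hB0).mp hy; linarith [this]
  have hprod : (B - 1) * (B - 1) ≤ (B * x) * (B * y) :=
    mul_le_mul hx' hy' hB1.le (by nlinarith)
  rw [div_le_iff₀ hB0, div_mul_eq_mul_div, div_mul_eq_mul_div,
    le_div_iff₀ (by positivity : (0:ℝ) < B * (B - 1))]
  nlinarith [hprod]

lemma mono_from_step {f : ℕ → ℝ} (h : ∀ n, 1 ≤ n → f n ≤ f (n + 1)) :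
    ∀ n m, 1 ≤ n → n ≤ m → f n ≤ f m := by
  intro n m hn hnm
  induction m with
  | zero => omega
  | succ k ih =>
    rcases Nat.lt_or_ge n (k + 1) with hlt | hge
    · exact (ih (by omega)).trans (h k (by omega))
    · have : n = k + 1 := by omega
      simp [this]

theorem stmt10 {Ω : Type*} [MeasurableSpace Ω] (μ : Measure Ω) [IsProbabilityMeasure μ]
    (B : ℝ) (hB : 2 < B) (R : ℕ → Ω → ℝ)
    (hlb : ∀ n, 1 ≤ n → ∀ x, (B - 1) / B ≤ R n x)
    (hpos : ∀ n x, 0 < R n x)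
    (hintlog : ∀ n, Integrable (fun x => Real.log (R n x)) μ)
    (hrec : ∀ n, ∃ R1 R2 : Ω → ℝ, IndepFun R1 R2 μ ∧
      IdentDistrib R1 (R n) μ μ ∧ IdentDistrib R2 (R n) μ μ ∧
      IdentDistrib (R (n + 1)) (fun x => (R1 x * R2 x + (B - 1)) / B) μ μ) :
    (∀ n m, 1 ≤ n → n ≤ m →
      (∫ x, Real.log (R n x / B) ∂μ) / 2 ^ n ≤ (∫ x, Real.log (R m x / B) ∂μ) / 2 ^ m) ∧
    (∀ n m, 1 ≤ n → n ≤ m →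
      (∫ x, Real.log ((B ^ 2 + B - 1) / (B * (B - 1)) * R m x) ∂μ) / 2 ^ m ≤
        (∫ x, Real.log ((B ^ 2 + B - 1) / (B * (B - 1)) * R n x) ∂μ) / 2 ^ n) ∧
    ∃ F : ℝ,
      Tendsto (fun n => (∫ x, Real.log (R n x / B) ∂μ) / 2 ^ n) atTop (𝓝 F) ∧
      Tendsto (fun n => (∫ x, Real.log ((B ^ 2 + B - 1) / (B * (B - 1)) * R n x) ∂μ) / 2 ^ n)
        atTop (𝓝 F) ∧
      ∀ N, 1 ≤ N →
        (∫ x, Real.log (R N x) ∂μ) / 2 ^ N - Real.log B / 2 ^ N ≤ F ∧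
        F ≤ (∫ x, Real.log (R N x) ∂μ) / 2 ^ N +
              Real.log ((B ^ 2 + B - 1) / (B * (B - 1))) / 2 ^ N := by
  have hB0 : (0:ℝ) < B := by linarith
  have hB1 : (0:ℝ) < B - 1 := by linarith
  set K : ℝ := (B ^ 2 + B - 1) / (B * (B - 1)) with hKdef
  have hK1 : 1 < K := by
    rw [hKdef, lt_div_iff₀ (by positivity)]
    nlinarith
  have hK0 : (0:ℝ) < K := lt_trans one_pos hK1
  have hlogB : 0 < Real.log B := Real.log_pos (by linarith)
  have hlogK : 0 < Real.log K := Real.log_pos hK1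
  set a : ℕ → ℝ := fun n => ∫ x, Real.log (R n x) ∂μ with ha
  -- rewriting the integrals in the statement
  have hIb : ∀ n, (∫ x, Real.log (R n x / B) ∂μ) = a n - Real.log B := by
    intro n
    have : (fun x => Real.log (R n x / B)) =
        fun x => Real.log (R n x) - Real.log B := by
      funext x; exact Real.log_div (hpos n x).ne' hB0.ne'
    rw [this, integral_sub (hintlog n) (integrable_const _), integral_const]
    simp [ha]
  have hIc : ∀ n, (∫ x, Real.log (K * R n x) ∂μ) = Real.log K + a n := by
    intro n
    have : (fun x => Real.log (K * R n x)) =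
        fun x => Real.log K + Real.log (R n x) := by
      funext x; exact Real.log_mul hK0.ne' (hpos n x).ne'
    rw [this, integral_add (integrable_const _) (hintlog n), integral_const]
    simp [ha]
  -- the key recursion inequalities
  have key : ∀ n, (2 * a n - Real.log B ≤ a (n + 1)) ∧
      (1 ≤ n → a (n + 1) ≤ 2 * a n + Real.log K) := by
    intro n
    obtain ⟨R1, R2, _, h1, h2, h3⟩ := hrec n
    have hlog1 : IdentDistrib (fun x => Real.log (R1 x)) (fun x => Real.log (R n x)) μ μ :=
      h1.comp Real.measurable_log
    have hlog2 : IdentDistrib (fun x => Real.log (R2 x)) (fun x => Real.log (R n x)) μ μ :=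
      h2.comp Real.measurable_log
    have hlog3 : IdentDistrib (fun x => Real.log (R (n + 1) x))
        (fun x => Real.log ((R1 x * R2 x + (B - 1)) / B)) μ μ :=
      h3.comp Real.measurable_log
    have int1 : Integrable (fun x => Real.log (R1 x)) μ :=
      hlog1.integrable_iff.mpr (hintlog n)
    have int2 : Integrable (fun x => Real.log (R2 x)) μ :=
      hlog2.integrable_iff.mpr (hintlog n)
    have int3 : Integrable (fun x => Real.log ((R1 x * R2 x + (B - 1)) / B)) μ :=
      hlog3.integrable_iff.mp (hintlog (n + 1))
    have int12 : Integrable (fun x => Real.log (R1 x) + Real.log (R2 x)) μ := int1.add int2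
    have hi1 : (∫ x, Real.log (R1 x) ∂μ) = a n := hlog1.integral_eq
    have hi2 : (∫ x, Real.log (R2 x) ∂μ) = a n := hlog2.integral_eq
    have hi3 : a (n + 1) = ∫ x, Real.log ((R1 x * R2 x + (B - 1)) / B) ∂μ := hlog3.integral_eq
    have hpos1 : ∀ᵐ x ∂μ, 0 < R1 x := ae_pos_of_identDistrib h1 (hpos n)
    have hpos2 : ∀ᵐ x ∂μ, 0 < R2 x := ae_pos_of_identDistrib h2 (hpos n)
    constructor
    · -- lower bound
      have hmono : ∀ᵐ x ∂μ, Real.log (R1 x) + Real.log (R2 x) - Real.log B ≤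
          Real.log ((R1 x * R2 x + (B - 1)) / B) := by
        filter_upwards [hpos1, hpos2] with x hx hy
        have h0 : 0 < R1 x * R2 x / B := by positivity
        have hle : R1 x * R2 x / B ≤ (R1 x * R2 x + (B - 1)) / B := by
          gcongr <;> linarith
        calc Real.log (R1 x) + Real.log (R2 x) - Real.log B
            = Real.log (R1 x * R2 x / B) := by
              rw [Real.log_div (by positivity) hB0.ne', Real.log_mul hx.ne' hy.ne']
          _ ≤ _ := Real.log_le_log h0 hle
      have hintL : Integrable
          (fun x => Real.log (R1 x) + Real.log (R2 x) - Real.log B) μ :=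
        int12.sub (integrable_const _)
      have := integral_mono_ae hintL int3 hmono
      rw [integral_sub int12 (integrable_const _), integral_add int1 int2,
        integral_const, hi1, hi2] at this
      simp only [measure_univ, ENNReal.toReal_one, probReal_univ, smul_eq_mul, one_mul] at this
      rw [hi3]; linarith
    · -- upper bound
      intro hn
      have hlb1 : ∀ᵐ x ∂μ, (B - 1) / B ≤ R1 x := ae_ge_of_identDistrib h1 _ (hlb n hn)
      have hlb2 : ∀ᵐ x ∂μ, (B - 1) / B ≤ R2 x := ae_ge_of_identDistrib h2 _ (hlb n hn)
      have hmono : ∀ᵐ x ∂μ, Real.log ((R1 x * R2 x + (B - 1)) / B) ≤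
          Real.log K + (Real.log (R1 x) + Real.log (R2 x)) := by
        filter_upwards [hpos1, hpos2, hlb1, hlb2] with x hx hy hx' hy'
        have h0 : 0 < (R1 x * R2 x + (B - 1)) / B := by positivity
        have hle := key_ineq hB hx' hy'
        calc Real.log ((R1 x * R2 x + (B - 1)) / B)
            ≤ Real.log (K * (R1 x * R2 x)) := Real.log_le_log h0 hle
          _ = Real.log K + (Real.log (R1 x) + Real.log (R2 x)) := by
              rw [Real.log_mul hK0.ne' (by positivity), Real.log_mul hx.ne' hy.ne']
      have hintU : Integrable
          (fun x => Real.log K + (Real.log (R1 x) + Real.log (R2 x))) μ :=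
        (integrable_const _).add int12
      have := integral_mono_ae int3 hintU hmono
      rw [integral_add (integrable_const _) int12, integral_add int1 int2,
        integral_const, hi1, hi2] at this
      simp only [measure_univ, ENNReal.toReal_one, probReal_univ, smul_eq_mul, one_mul] at this
      rw [hi3]; linarith
  -- the two scaled sequences
  set b : ℕ → ℝ := fun n => (a n - Real.log B) / 2 ^ n with hb
  set c : ℕ → ℝ := fun n => (a n + Real.log K) / 2 ^ n with hc
  have hbstep : ∀ n, 1 ≤ n → b n ≤ b (n + 1) := by
    intro n _
    rw [hb]
    have h2n : (0:ℝ) < 2 ^ n := by positivity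
    have h2n1 : (0:ℝ) < 2 ^ (n + 1) := by positivity
    rw [div_le_div_iff₀ h2n h2n1]
    have := (key n).1
    have hp : (2:ℝ) ^ (n + 1) = 2 * 2 ^ n := by ring
    rw [hp]; nlinarith [mul_le_mul_of_nonneg_left this h2n.le]
  have hcstep : ∀ n, 1 ≤ n → c (n + 1) ≤ c n := by
    intro n hn
    rw [hc]
    have h2n : (0:ℝ) < 2 ^ n := by positivity
    have h2n1 : (0:ℝ) < 2 ^ (n + 1) := by positivity
    rw [div_le_div_iff₀ h2n1 h2n]
    have := (key n).2 hn
    have hp : (2:ℝ) ^ (n + 1) = 2 * 2 ^ n := by ring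
    rw [hp]; nlinarith [mul_le_mul_of_nonneg_left this h2n.le]
  have hbmono : ∀ n m, 1 ≤ n → n ≤ m → b n ≤ b m := mono_from_step hbstep
  have hcmono : ∀ n m, 1 ≤ n → n ≤ m → c m ≤ c n := by
    have := mono_from_step (f := fun n => -c n) (fun n hn => by
      simpa using neg_le_neg (hcstep n hn))
    intro n m hn hnm
    have := this n m hn hnm
    simpa using this
  have hbc : ∀ n, b n ≤ c n := by
    intro n
    show (a n - Real.log B) / 2 ^ n ≤ (a n + Real.log K) / 2 ^ n
    gcongr
    linarith
  -- convergence
  have hgmono : Monotone (fun n => b (n + 1)) := by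
    apply monotone_nat_of_le_succ
    intro n; exact hbstep (n + 1) (by omega)
  have hgbdd : BddAbove (Set.range fun n => b (n + 1)) := by
    refine ⟨c 1, ?_⟩
    rintro x ⟨n, rfl⟩
    exact (hbc (n + 1)).trans (hcmono 1 (n + 1) le_rfl (by omega))
  set F : ℝ := ⨆ n, b (n + 1) with hF
  have hgtend : Tendsto (fun n => b (n + 1)) atTop (𝓝 F) := tendsto_atTop_ciSup hgmono hgbdd
  have hbtend : Tendsto b atTop (𝓝 F) := (tendsto_add_atTop_iff_nat 1).mp hgtend
  have hdiff : ∀ n, c n = b n + (Real.log B + Real.log K) * (1 / 2 : ℝ) ^ n := by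
    intro n
    rw [hb, hc, div_pow, one_pow]
    field_simp
    ring
  have hctend : Tendsto c atTop (𝓝 F) := by
    have h0 : Tendsto (fun n => (Real.log B + Real.log K) * (1 / 2 : ℝ) ^ n) atTop (𝓝 0) := by
      have := tendsto_pow_atTop_nhds_zero_of_lt_one (by norm_num : (0:ℝ) ≤ 1 / 2)
        (by norm_num : (1:ℝ) / 2 < 1)
      simpa using this.const_mul (Real.log B + Real.log K)
    have := hbtend.add h0
    simp only [add_zero] at this
    refine this.congr fun n => (hdiff n).symm
  -- expressing statement integrals via b and c
  have heqb : ∀ n, (∫ x, Real.log (R n x / B) ∂μ) / 2 ^ n = b n := by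
    intro n; rw [hIb n, hb]
  have heqc : ∀ n, (∫ x, Real.log (K * R n x) ∂μ) / 2 ^ n = c n := by
    intro n; rw [hIc n, hc]; ring
  refine ⟨?_, ?_, F, ?_, ?_, ?_⟩
  · intro n m hn hnm
    rw [heqb n, heqb m]; exact hbmono n m hn hnm
  · intro n m hn hnm
    rw [heqc n, heqc m]; exact hcmono n m hn hnm
  · exact hbtend.congr fun n => (heqb n).symm
  · exact hctend.congr fun n => (heqc n).symm
  · intro N hN
    constructor
    · have h1 : b N ≤ F :=
        ge_of_tendsto hbtend (eventually_atTop.2 ⟨N, fun m hm => hbmono N m hN hm⟩)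
      have : (∫ x, Real.log (R N x) ∂μ) / 2 ^ N - Real.log B / 2 ^ N = b N := by
        show _ = (a N - Real.log B) / 2 ^ N
        rw [sub_div]
      linarith [this ▸ h1]
    · have h1 : F ≤ c N :=
        le_of_tendsto hctend (eventually_atTop.2 ⟨N, fun m hm => hcmono N m hN hm⟩)
      have : (∫ x, Real.log (R N x) ∂μ) / 2 ^ N + Real.log K / 2 ^ N = c N := by
        show _ = (a N + Real.log K) / 2 ^ N
        rw [add_div]
      linarith [this ▸ h1]
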